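/- arXiv:1105.0414 — 3 statements merged into one kernel-verified Lean document; each statement's English description precedes it below -/
import Mathlib

section
/- Let n ≥ 1, b ≥ 0, c ≥ 0 with b + c < n, μ > 0, λ ≥ 0, and t > 0. Then there exist constants C₁, C₂ > 0 (depending only on n, b, c, μ) such that C₁ · t^{-μ/2} · (|x| + λ + √t)^{-b} · (|x| + √t)^{-c} ≤ ∫_{ℝⁿ} (|x−y| + λ)^{-b} |x−y|^{-c} (|y| + √t)^{-n−μ} dy ≤ C₂ · t^{-μ/2} · (|x| + λ + √t)^{-b} · (|x| + √t)^{-c} for all x ∈ ℝⁿ. -/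
open MeasureTheory Real Metric Set Module Filter
open scoped ENNReal NNReal

section Aux

variable {E : Type*} [NormedAddCommGroup E] [NormedSpace ℝ E] [MeasurableSpace E] [BorelSpace E]
  [FiniteDimensional ℝ E] (μ : Measure E) [μ.IsAddHaarMeasure]

lemma my_integrableOn_norm_rpow_ball {s : ℝ} (hs0 : 0 ≤ s) (hsn : s < finrank ℝ E) (r : ℝ) :
    IntegrableOn (fun x : E => ‖x‖ ^ (-s)) (ball (0 : E) r) μ := by
  rcases eq_or_lt_of_le hs0 with rfl | hs
  · have h1 : IntegrableOn (fun _ : E => (1:ℝ)) (ball 0 r) μ :=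
      integrableOn_const measure_ball_lt_top.ne
    simpa using h1
  have hmeas : Measurable fun x : E => ‖x‖ ^ (-s) := by fun_prop
  refine ⟨hmeas.aestronglyMeasurable.restrict, ?_⟩
  rw [hasFiniteIntegral_iff_ofReal ?nn]
  case nn => exact Eventually.of_forall fun x => rpow_nonneg (norm_nonneg _) _
  rw [lintegral_eq_lintegral_meas_le _ (Eventually.of_forall fun x => rpow_nonneg (norm_nonneg _) _)
    hmeas.aemeasurable.restrict]
  have hsub : ∀ t : ℝ, 0 < t → {a : E | t ≤ ‖a‖ ^ (-s)} ⊆ closedBall 0 (t ^ (-s⁻¹)) := by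
    intro t ht a ha
    simp only [mem_setOf_eq] at ha
    rcases eq_or_lt_of_le (norm_nonneg a) with h0 | h0
    · have : ‖a‖ ^ (-s) = 0 := by rw [← h0, Real.zero_rpow (neg_ne_zero.2 hs.ne')]
      exact absurd (ha.trans_eq this) (not_le.2 ht)
    rw [mem_closedBall_zero_iff]
    have h1 : (‖a‖ ^ (-s)) ^ (-s⁻¹) ≤ t ^ (-s⁻¹) :=
      Real.rpow_le_rpow_of_nonpos ht ha (neg_nonpos.2 (inv_nonneg.2 hs0))
    calc ‖a‖ = (‖a‖ ^ (-s)) ^ (-s⁻¹) := by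
          rw [← Real.rpow_mul (norm_nonneg a), neg_mul_neg, mul_inv_cancel₀ hs.ne', Real.rpow_one]
      _ ≤ t ^ (-s⁻¹) := h1
  calc ∫⁻ t in Ioi (0:ℝ), μ.restrict (ball 0 r) {a : E | t ≤ ‖a‖ ^ (-s)}
      ≤ ∫⁻ t in Ioc (0:ℝ) 1 ∪ Ioi 1, μ.restrict (ball 0 r) {a : E | t ≤ ‖a‖ ^ (-s)} :=
        lintegral_mono_set Ioi_subset_Ioc_union_Ioi
    _ ≤ (∫⁻ t in Ioc (0:ℝ) 1, μ.restrict (ball 0 r) {a : E | t ≤ ‖a‖ ^ (-s)}) +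
        ∫⁻ t in Ioi (1:ℝ), μ.restrict (ball 0 r) {a : E | t ≤ ‖a‖ ^ (-s)} :=
        lintegral_union_le _ _ _
    _ < ∞ := by
        refine ENNReal.add_lt_top.2 ⟨?_, ?_⟩
        · calc ∫⁻ t in Ioc (0:ℝ) 1, μ.restrict (ball 0 r) {a : E | t ≤ ‖a‖ ^ (-s)}
              ≤ ∫⁻ _ in Ioc (0:ℝ) 1, μ (ball 0 r) := by
                refine setLIntegral_mono' measurableSet_Ioc fun t _ => ?_
                exact le_trans (measure_mono (subset_univ _)) (by rw [Measure.restrict_apply_univ])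
            _ = μ (ball 0 r) * volume (Ioc (0:ℝ) 1) := by rw [setLIntegral_const]
            _ < ∞ := by
                apply ENNReal.mul_lt_top measure_ball_lt_top
                simp [Real.volume_Ioc]
        · calc ∫⁻ t in Ioi (1:ℝ), μ.restrict (ball 0 r) {a : E | t ≤ ‖a‖ ^ (-s)}
              ≤ ∫⁻ t in Ioi (1:ℝ), ENNReal.ofReal (t ^ (-s⁻¹ * finrank ℝ E)) * μ (ball 0 1) := by
                refine setLIntegral_mono' measurableSet_Ioi fun t ht => ?_
                have ht1 : (1:ℝ) < t := ht
                have ht0 : (0:ℝ) < t := lt_trans one_pos ht1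
                calc μ.restrict (ball 0 r) {a : E | t ≤ ‖a‖ ^ (-s)}
                    ≤ μ (closedBall 0 (t ^ (-s⁻¹))) :=
                      le_trans (Measure.restrict_apply_le _ _) (measure_mono (hsub t ht0))
                  _ = ENNReal.ofReal ((t ^ (-s⁻¹)) ^ finrank ℝ E) * μ (ball 0 1) :=
                      μ.addHaar_closedBall _ (by positivity)
                  _ = ENNReal.ofReal (t ^ (-s⁻¹ * finrank ℝ E)) * μ (ball 0 1) := by
                      rw [← Real.rpow_natCast (t ^ (-s⁻¹)) _, ← Real.rpow_mul ht0.le]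
            _ = (∫⁻ t in Ioi (1:ℝ), ENNReal.ofReal (t ^ (-s⁻¹ * finrank ℝ E))) * μ (ball 0 1) :=
                lintegral_mul_const' _ _ measure_ball_lt_top.ne
            _ < ∞ := by
                apply ENNReal.mul_lt_top _ measure_ball_lt_top
                apply IntegrableOn.setLIntegral_lt_top
                apply integrableOn_Ioi_rpow_of_lt _ one_pos
                rw [neg_mul, neg_lt_neg_iff]
                rw [lt_inv_mul_iff₀ hs, mul_one] at *
                exact hsn

lemma my_setIntegral_norm_rpow_ball {s : ℝ} {R : ℝ} (hR : 0 < R) :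
    ∫ w in ball (0 : E) R, ‖w‖ ^ (-s) ∂μ
      = R ^ ((finrank ℝ E : ℝ) - s) * ∫ v in ball (0 : E) 1, ‖v‖ ^ (-s) ∂μ := by
  have key := MeasureTheory.Measure.setIntegral_comp_smul_of_pos μ (fun w : E => ‖w‖ ^ (-s)) (ball (0:E) 1) hR
  rw [smul_unitBall_of_pos hR] at key
  have h1 : ∀ v : E, ‖R • v‖ ^ (-s) = R ^ (-s) * ‖v‖ ^ (-s) := by
    intro v
    rw [norm_smul, Real.norm_of_nonneg hR.le, Real.mul_rpow hR.le (norm_nonneg _)]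
  simp_rw [h1] at key
  rw [MeasureTheory.integral_const_mul, smul_eq_mul] at key
  have h2 : (0:ℝ) < R ^ finrank ℝ E := pow_pos hR _
  have h3 : ∫ w in ball (0:E) R, ‖w‖ ^ (-s) ∂μ
      = R ^ finrank ℝ E * R ^ (-s) * ∫ v in ball (0:E) 1, ‖v‖ ^ (-s) ∂μ := by
    rw [mul_assoc, key, ← mul_assoc, mul_inv_cancel₀ h2.ne', one_mul]
  rw [h3]
  congr 1
  rw [← Real.rpow_natCast R (finrank ℝ E), ← Real.rpow_add hR, sub_eq_add_neg]

lemma my_J_estimate [Nontrivial E] {b c ν : ℝ} (hb : 0 ≤ b) (hc : 0 ≤ c)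
    (hbc : b + c < finrank ℝ E) (hν : 0 < ν) :
    ∃ c₁ c₂ : ℝ, 0 < c₁ ∧ 0 < c₂ ∧ ∀ lam : ℝ, 0 ≤ lam → ∀ x : E,
      Integrable (fun z : E => (‖x - z‖ + lam) ^ (-b) * ‖x - z‖ ^ (-c)
          * (‖z‖ + 1) ^ (-(finrank ℝ E : ℝ) - ν)) μ ∧
      c₁ * (‖x‖ + lam + 1) ^ (-b) * (‖x‖ + 1) ^ (-c)
        ≤ (∫ z : E, (‖x - z‖ + lam) ^ (-b) * ‖x - z‖ ^ (-c)
            * (‖z‖ + 1) ^ (-(finrank ℝ E : ℝ) - ν) ∂μ) ∧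
      (∫ z : E, (‖x - z‖ + lam) ^ (-b) * ‖x - z‖ ^ (-c)
            * (‖z‖ + 1) ^ (-(finrank ℝ E : ℝ) - ν) ∂μ)
        ≤ c₂ * (‖x‖ + lam + 1) ^ (-b) * (‖x‖ + 1) ^ (-c) := by
  set N : ℝ := (finrank ℝ E : ℝ) with hN
  have hN1 : (1:ℝ) ≤ N := by
    have : 0 < finrank ℝ E := finrank_pos
    simp only [hN]
    exact_mod_cast this
  set r : ℝ := N + ν with hr
  have hr0 : 0 < r := by positivity
  have hexp : -(finrank ℝ E : ℝ) - ν = -r := by rw [hr, hN]; ring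
  set s : ℝ := b + c with hs
  have hs0 : 0 ≤ s := by positivity
  -- constants
  set K₀ : ℝ := ∫ v in ball (0:E) 1, ‖v‖ ^ (-s) ∂μ with hK₀
  have hK₀0 : 0 ≤ K₀ := setIntegral_nonneg measurableSet_ball fun z _ => by positivity
  have hK₁int : Integrable (fun z : E => (‖z‖ + 1) ^ (-r)) μ := by
    have := integrable_one_add_norm (μ := μ) (E := E) (r := r) (by simp [hr, hN, hν])
    simpa [add_comm] using this
  set K₁ : ℝ := ∫ z : E, (‖z‖ + 1) ^ (-r) ∂μ with hK₁
  have hK₁0 : 0 ≤ K₁ := integral_nonneg fun z => by positivity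
  have hballpos : 0 < (μ (ball (0:E) 1)).toReal :=
    ENNReal.toReal_pos (measure_ball_pos μ 0 one_pos).ne' measure_ball_lt_top.ne
  refine ⟨(μ (ball (0:E) 1)).toReal * 2 ^ (-r),
    2 ^ (ν + b + c) * K₀ + 2 ^ (b + c) * K₁ + 1, by positivity, by positivity, ?_⟩
  intro lam hlam x
  simp only [hexp, show -N - ν = -r by rw [hr]; ring]
  -- abbreviations
  set X : ℝ := ‖x‖ + 1 with hX
  have hX1 : (1:ℝ) ≤ X := by simp [hX]
  have hX0 : (0:ℝ) < X := by linarith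
  set R : ℝ := X / 2 with hRdef
  have hR : 0 < R := by positivity
  set L : ℝ := ‖x‖ + lam + 1 with hL
  have hL0 : 0 < L := by positivity
  have hRL : L / 2 ≤ R + lam := by rw [hRdef, hL, hX]; linarith
  set g : E → ℝ := fun z => (‖x - z‖ + lam) ^ (-b) * ‖x - z‖ ^ (-c) * (‖z‖ + 1) ^ (-r)
    with hg
  have hgnn : ∀ z, 0 ≤ g z := fun z => by positivity
  have hgm : AEStronglyMeasurable g μ := by
    apply Measurable.aestronglyMeasurable
    fun_prop
  -- a.e. z ≠ x
  have haex : ∀ᵐ z ∂μ, z ≠ x := by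
    rw [ae_iff]
    simpa using measure_singleton (μ := μ) x
  -- the majorant
  set CA : ℝ := 2 ^ r * X ^ (-r) * R ^ b * (R + lam) ^ (-b) with hCA
  set CB : ℝ := (R + lam) ^ (-b) * R ^ (-c) with hCB
  set Φ : E → ℝ := fun z =>
    CA * (ball x R).indicator (fun z => ‖x - z‖ ^ (-s)) z + CB * (‖z‖ + 1) ^ (-r) with hΦ
  have hindeq : (fun z : E => ((ball (0:E) R).indicator (fun w => ‖w‖ ^ (-s))) (x - z))
      = (ball x R).indicator (fun z => ‖x - z‖ ^ (-s)) := by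
    funext z
    have hmem : x - z ∈ ball (0:E) R ↔ z ∈ ball x R := by
      rw [mem_ball_zero_iff, mem_ball, dist_eq_norm, norm_sub_rev]
    by_cases hz : z ∈ ball x R
    · rw [indicator_of_mem hz, indicator_of_mem (hmem.2 hz)]
    · rw [indicator_of_notMem hz, indicator_of_notMem (fun h => hz (hmem.1 h))]
  have hind_int : Integrable ((ball x R).indicator (fun z : E => ‖x - z‖ ^ (-s))) μ := by
    rw [← hindeq]
    exact (((integrable_indicator_iff measurableSet_ball).2
      (my_integrableOn_norm_rpow_ball μ hs0 hbc R)).comp_sub_left x)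
  have hΦint : Integrable Φ μ := (hind_int.const_mul CA).add (hK₁int.const_mul CB)
  -- pointwise bound g ≤ Φ a.e.
  have hbound : ∀ᵐ z ∂μ, g z ≤ Φ z := by
    filter_upwards [haex] with z hzx
    have hw : 0 < ‖x - z‖ := by
      rw [norm_pos_iff, sub_ne_zero]
      exact fun h => hzx h.symm
    by_cases hzball : z ∈ ball x R
    · have hwR : ‖x - z‖ ≤ R := by
        rw [mem_ball, dist_eq_norm, norm_sub_rev] at hzball
        exact hzball.le
      rw [hΦ]
      simp only [indicator_of_mem hzball]
      have hstep1 : (‖x - z‖ + lam) ^ (-b) ≤ R ^ b * (R + lam) ^ (-b) * ‖x - z‖ ^ (-b) := by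
        have hq : 0 < ‖x - z‖ / R * (R + lam) := by positivity
        have hle : ‖x - z‖ / R * (R + lam) ≤ ‖x - z‖ + lam := by
          rw [div_mul_eq_mul_div, div_le_iff₀ hR]
          nlinarith
        calc (‖x - z‖ + lam) ^ (-b) ≤ (‖x - z‖ / R * (R + lam)) ^ (-b) :=
              Real.rpow_le_rpow_of_nonpos hq hle (neg_nonpos.2 hb)
          _ = (‖x - z‖ / R) ^ (-b) * (R + lam) ^ (-b) :=
              Real.mul_rpow (by positivity) (by positivity)
          _ = ‖x - z‖ ^ (-b) / R ^ (-b) * (R + lam) ^ (-b) := by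
              rw [Real.div_rpow hw.le hR.le (-b)]
          _ = R ^ b * (R + lam) ^ (-b) * ‖x - z‖ ^ (-b) := by
              rw [Real.rpow_neg hR.le, div_eq_mul_inv, inv_inv]
              ring
      have hstep2 : (‖z‖ + 1) ^ (-r) ≤ 2 ^ r * X ^ (-r) := by
        have h1 : X / 2 ≤ ‖z‖ + 1 := by
          have h2 : ‖x‖ - ‖x - z‖ ≤ ‖z‖ := by
            have := norm_sub_norm_le x (x - z)
            simpa using this
          linarith [hRdef, hX, h2, hwR]
        calc (‖z‖ + 1) ^ (-r) ≤ (X / 2) ^ (-r) :=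
              Real.rpow_le_rpow_of_nonpos (by positivity) h1 (neg_nonpos.2 hr0.le)
          _ = X ^ (-r) / 2 ^ (-r) := Real.div_rpow hX0.le (by norm_num : (0:ℝ) ≤ 2) (-r)
          _ = 2 ^ r * X ^ (-r) := by
              rw [Real.rpow_neg (by norm_num : (0:ℝ) ≤ 2), div_eq_mul_inv, inv_inv]
              ring
      have hcomb : g z ≤ (R ^ b * (R + lam) ^ (-b) * ‖x - z‖ ^ (-b)) * ‖x - z‖ ^ (-c)
          * (2 ^ r * X ^ (-r)) := by
        rw [hg]
        apply mul_le_mul (mul_le_mul hstep1 le_rfl (by positivity) (by positivity)) hstep2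
          (by positivity) (by positivity)
      have hww : ‖x - z‖ ^ (-b) * ‖x - z‖ ^ (-c) = ‖x - z‖ ^ (-s) := by
        rw [← Real.rpow_add hw]
        congr 1
        rw [hs]; ring
      have : (R ^ b * (R + lam) ^ (-b) * ‖x - z‖ ^ (-b)) * ‖x - z‖ ^ (-c)
          * (2 ^ r * X ^ (-r)) = CA * ‖x - z‖ ^ (-s) := by
        rw [hCA, ← hww]; ring
      rw [this] at hcomb
      have hB : 0 ≤ CB * (‖z‖ + 1) ^ (-r) := by positivity
      linarith
    · rw [hΦ]
      simp only [indicator_of_notMem hzball]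
      have hwR : R ≤ ‖x - z‖ := by
        rw [mem_ball, dist_eq_norm, norm_sub_rev, not_lt] at hzball
        exact hzball
      have h1 : (‖x - z‖ + lam) ^ (-b) ≤ (R + lam) ^ (-b) :=
        Real.rpow_le_rpow_of_nonpos (by positivity) (by linarith) (neg_nonpos.2 hb)
      have h2 : ‖x - z‖ ^ (-c) ≤ R ^ (-c) :=
        Real.rpow_le_rpow_of_nonpos hR hwR (neg_nonpos.2 hc)
      have : g z ≤ ((R + lam) ^ (-b) * R ^ (-c)) * (‖z‖ + 1) ^ (-r) := by
        rw [hg]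
        apply mul_le_mul (mul_le_mul h1 h2 (by positivity) (by positivity)) le_rfl
          (by positivity) (by positivity)
      rw [hCB]
      linarith
  -- integrability of g
  have hgint : Integrable g μ := by
    refine hΦint.mono' hgm ?_
    filter_upwards [hbound] with z hz
    rw [Real.norm_of_nonneg (hgnn z)]
    exact hz
  refine ⟨hgint, ?_, ?_⟩
  -- LOWER BOUND
  · have hlow : ∀ᵐ z ∂(μ.restrict (ball (0:E) 1)),
        (fun _ : E => 2 ^ (-r) * (L ^ (-b) * X ^ (-c))) z ≤ g z := by
      filter_upwards [ae_restrict_of_ae haex, ae_restrict_mem measurableSet_ball] with z hzx hzb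
      have hw : 0 < ‖x - z‖ := by
        rw [norm_pos_iff, sub_ne_zero]
        exact fun h => hzx h.symm
      have hz1 : ‖z‖ < 1 := mem_ball_zero_iff.1 hzb
      have hwle : ‖x - z‖ ≤ X := by
        have := norm_sub_le x z
        rw [hX]; linarith
      have f1 : L ^ (-b) ≤ (‖x - z‖ + lam) ^ (-b) :=
        Real.rpow_le_rpow_of_nonpos (by positivity) (by rw [hL]; linarith)
          (neg_nonpos.2 hb)
      have f2 : X ^ (-c) ≤ ‖x - z‖ ^ (-c) :=
        Real.rpow_le_rpow_of_nonpos hw hwle (neg_nonpos.2 hc)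
      have f3 : (2:ℝ) ^ (-r) ≤ (‖z‖ + 1) ^ (-r) :=
        Real.rpow_le_rpow_of_nonpos (by positivity) (by linarith) (neg_nonpos.2 hr0.le)
      calc 2 ^ (-r) * (L ^ (-b) * X ^ (-c)) = (L ^ (-b) * X ^ (-c)) * 2 ^ (-r) := by ring
        _ ≤ ((‖x - z‖ + lam) ^ (-b) * ‖x - z‖ ^ (-c)) * (‖z‖ + 1) ^ (-r) :=
            mul_le_mul (mul_le_mul f1 f2 (by positivity) (by positivity)) f3
              (by positivity) (by positivity)
        _ = g z := by rw [hg]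
    have hstep : ∫ _ in ball (0:E) 1, 2 ^ (-r) * (L ^ (-b) * X ^ (-c)) ∂μ
        ≤ ∫ z in ball (0:E) 1, g z ∂μ :=
      setIntegral_mono_ae_restrict
        (integrableOn_const measure_ball_lt_top.ne) hgint.integrableOn hlow
    rw [setIntegral_const] at hstep
    have hstep2 : ∫ z in ball (0:E) 1, g z ∂μ ≤ ∫ z, g z ∂μ :=
      setIntegral_le_integral hgint (Eventually.of_forall hgnn)
    have : (μ (ball (0:E) 1)).toReal * 2 ^ (-r) * L ^ (-b) * X ^ (-c)
        = (μ (ball (0:E) 1)).toReal • (2 ^ (-r) * (L ^ (-b) * X ^ (-c))) := by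
      rw [smul_eq_mul]; ring
    rw [this]
    exact hstep.trans hstep2
  -- UPPER BOUND
  · have hintΦ : ∫ z, Φ z ∂μ = CA * (R ^ (N - s) * K₀) + CB * K₁ := by
      rw [hΦ, integral_add (hind_int.const_mul CA) (hK₁int.const_mul CB),
        integral_const_mul, integral_const_mul]
      congr 2
      rw [← hindeq, integral_sub_left_eq_self
        ((ball (0:E) R).indicator (fun w : E => ‖w‖ ^ (-s))) μ x,
        integral_indicator measurableSet_ball,
        my_setIntegral_norm_rpow_ball μ hR]
    have hmono : ∫ z, g z ∂μ ≤ ∫ z, Φ z ∂μ := integral_mono_ae hgint hΦint hbound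
    rw [hintΦ] at hmono
    refine hmono.trans ?_
    -- now pure arithmetic
    have e1 : R ^ b * R ^ (N - s) = R ^ (N - c) := by
      rw [← Real.rpow_add hR]; congr 1; rw [hs]; ring
    have ec : R ^ (N - c) = X ^ (N - c) * 2 ^ (c - N) := by
      rw [hRdef, Real.div_rpow hX0.le (by norm_num : (0:ℝ) ≤ 2) _,
        Real.rpow_sub (by norm_num : (0:ℝ) < 2)]
      field_simp
      rw [← Real.rpow_add (by norm_num : (0:ℝ) < 2)]
      congr 1
      ring
    have ed : X ^ (-r) * X ^ (N - c) = X ^ (-ν - c) := by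
      rw [← Real.rpow_add hX0]; congr 1; rw [hr]; ring
    have ee : X ^ (-ν - c) ≤ X ^ (-c) :=
      Real.rpow_le_rpow_of_exponent_le hX1 (by linarith)
    have e3 : (R + lam) ^ (-b) ≤ 2 ^ b * L ^ (-b) := by
      calc (R + lam) ^ (-b) ≤ (L / 2) ^ (-b) :=
            Real.rpow_le_rpow_of_nonpos (by positivity) hRL (neg_nonpos.2 hb)
        _ = L ^ (-b) / 2 ^ (-b) := Real.div_rpow hL0.le (by norm_num : (0:ℝ) ≤ 2) (-b)
        _ = 2 ^ b * L ^ (-b) := by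
            rw [Real.rpow_neg (by norm_num : (0:ℝ) ≤ 2), div_eq_mul_inv, inv_inv]; ring
    have e3' : R ^ (-c) = 2 ^ c * X ^ (-c) := by
      rw [hRdef, Real.div_rpow hX0.le (by norm_num : (0:ℝ) ≤ 2) _,
        Real.rpow_neg (by norm_num : (0:ℝ) ≤ 2), div_eq_mul_inv, inv_inv]
      ring
    have ef : (2:ℝ) ^ r * 2 ^ (c - N) * 2 ^ b = 2 ^ (ν + b + c) := by
      rw [← Real.rpow_add (by norm_num : (0:ℝ) < 2), ← Real.rpow_add (by norm_num : (0:ℝ) < 2)]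
      congr 1; rw [hr]; ring
    have hT1 : CA * (R ^ (N - s) * K₀) ≤ 2 ^ (ν + b + c) * K₀ * (L ^ (-b) * X ^ (-c)) := by
      have harith : CA * (R ^ (N - s) * K₀)
          = K₀ * (2 ^ r * X ^ (-r) * (R ^ b * R ^ (N - s)) * (R + lam) ^ (-b)) := by
        rw [hCA]; ring
      rw [harith, e1, ec]
      have harith2 : K₀ * (2 ^ r * X ^ (-r) * (X ^ (N - c) * 2 ^ (c - N)) * (R + lam) ^ (-b))
          = K₀ * ((2 ^ r * 2 ^ (c - N)) * (X ^ (-r) * X ^ (N - c)) * (R + lam) ^ (-b)) := by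
        ring
      rw [harith2, ed]
      calc K₀ * ((2 ^ r * 2 ^ (c - N)) * X ^ (-ν - c) * (R + lam) ^ (-b))
          ≤ K₀ * ((2 ^ r * 2 ^ (c - N)) * X ^ (-c) * (2 ^ b * L ^ (-b))) := by
            apply mul_le_mul_of_nonneg_left _ hK₀0
            apply mul_le_mul (mul_le_mul le_rfl ee (by positivity) (by positivity)) e3
              (by positivity) (by positivity)
        _ = (2 ^ r * 2 ^ (c - N) * 2 ^ b) * K₀ * (L ^ (-b) * X ^ (-c)) := by ring
        _ = 2 ^ (ν + b + c) * K₀ * (L ^ (-b) * X ^ (-c)) := by rw [ef]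
    have hT2 : CB * K₁ ≤ 2 ^ (b + c) * K₁ * (L ^ (-b) * X ^ (-c)) := by
      rw [hCB, e3']
      calc (R + lam) ^ (-b) * (2 ^ c * X ^ (-c)) * K₁
          ≤ (2 ^ b * L ^ (-b)) * (2 ^ c * X ^ (-c)) * K₁ := by
            apply mul_le_mul_of_nonneg_right _ hK₁0
            apply mul_le_mul_of_nonneg_right e3 (by positivity)
        _ = (2 ^ b * 2 ^ c) * K₁ * (L ^ (-b) * X ^ (-c)) := by ring
        _ = 2 ^ (b + c) * K₁ * (L ^ (-b) * X ^ (-c)) := by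
            rw [← Real.rpow_add (by norm_num : (0:ℝ) < 2)]
    have hT3 : (0:ℝ) ≤ 1 * (L ^ (-b) * X ^ (-c)) := by positivity
    have : (2 ^ (ν + b + c) * K₀ + 2 ^ (b + c) * K₁ + 1) * L ^ (-b) * X ^ (-c)
        = 2 ^ (ν + b + c) * K₀ * (L ^ (-b) * X ^ (-c))
          + 2 ^ (b + c) * K₁ * (L ^ (-b) * X ^ (-c)) + 1 * (L ^ (-b) * X ^ (-c)) := by
      ring
    rw [this]
    linarith

end Aux

theorem stmt0 (n : ℕ) (hn : 1 ≤ n) (b c μ : ℝ) (hb : 0 ≤ b) (hc : 0 ≤ c)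
    (hbc : b + c < n) (hμ : 0 < μ) :
    ∃ C₁ C₂ : ℝ, 0 < C₁ ∧ 0 < C₂ ∧
      ∀ (lam t : ℝ), 0 ≤ lam → 0 < t →
        ∀ x : EuclideanSpace ℝ (Fin n),
          (C₁ * t ^ (-μ / 2) * (‖x‖ + lam + Real.sqrt t) ^ (-b) * (‖x‖ + Real.sqrt t) ^ (-c)
            ≤ ∫ y : EuclideanSpace ℝ (Fin n),
                (‖x - y‖ + lam) ^ (-b) * ‖x - y‖ ^ (-c) * (‖y‖ + Real.sqrt t) ^ (-(n : ℝ) - μ)) ∧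
          (∫ y : EuclideanSpace ℝ (Fin n),
                (‖x - y‖ + lam) ^ (-b) * ‖x - y‖ ^ (-c) * (‖y‖ + Real.sqrt t) ^ (-(n : ℝ) - μ))
            ≤ C₂ * t ^ (-μ / 2) * (‖x‖ + lam + Real.sqrt t) ^ (-b) * (‖x‖ + Real.sqrt t) ^ (-c) := by
  classical
  set E := EuclideanSpace ℝ (Fin n) with hE
  have hrank : finrank ℝ E = n := finrank_euclideanSpace_fin
  haveI : Nontrivial E := by
    apply Module.nontrivial_of_finrank_pos (R := ℝ) (M := E)
    rw [hrank]; omega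
  obtain ⟨c₁, c₂, hc₁, hc₂, hJ⟩ := my_J_estimate (volume : Measure E) hb hc
    (by rw [hrank]; exact_mod_cast hbc) hμ
  refine ⟨c₁, c₂, hc₁, hc₂, ?_⟩
  intro lam t hlam ht x
  set st := Real.sqrt t with hst
  have hst0 : 0 < st := Real.sqrt_pos.2 ht
  set lam' := lam / st with hlam'
  have hlam'0 : 0 ≤ lam' := by positivity
  set x' : E := st⁻¹ • x with hx'
  have hxx : x = st • x' := by rw [hx', smul_inv_smul₀ hst0.ne']
  have hnx : ‖x‖ = st * ‖x'‖ := by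
    rw [hxx, norm_smul, Real.norm_of_nonneg hst0.le]
  -- pointwise identity for the integrand under scaling
  set f : E → ℝ := fun y => (‖x - y‖ + lam) ^ (-b) * ‖x - y‖ ^ (-c)
      * (‖y‖ + st) ^ (-(n : ℝ) - μ) with hf
  set g : E → ℝ := fun z => (‖x' - z‖ + lam') ^ (-b) * ‖x' - z‖ ^ (-c)
      * (‖z‖ + 1) ^ (-(n : ℝ) - μ) with hg
  have hpt : ∀ z : E, f (st • z) = st ^ (-(b + c + (n:ℝ) + μ)) * g z := by
    intro z
    have h1 : x - st • z = st • (x' - z) := by rw [hxx, smul_sub]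
    have h2 : ‖x - st • z‖ = st * ‖x' - z‖ := by
      rw [h1, norm_smul, Real.norm_of_nonneg hst0.le]
    have h3 : ‖x - st • z‖ + lam = st * (‖x' - z‖ + lam') := by
      rw [h2, hlam', mul_add, mul_div_cancel₀ _ hst0.ne']
    have h4 : ‖st • z‖ + st = st * (‖z‖ + 1) := by
      rw [norm_smul, Real.norm_of_nonneg hst0.le]; ring
    rw [hf, hg]
    simp only
    rw [h3, h2, h4,
      Real.mul_rpow hst0.le (by positivity),
      Real.mul_rpow hst0.le (norm_nonneg _),
      Real.mul_rpow hst0.le (by positivity)]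
    rw [show (-(b + c + (n:ℝ) + μ)) = (-b) + ((-c) + (-(n:ℝ) - μ)) by ring,
      Real.rpow_add hst0, Real.rpow_add hst0]
    ring
  -- the integral identity
  have hI : (∫ y : E, f y) = st ^ ((n:ℝ)) * (st ^ (-(b + c + (n:ℝ) + μ)) * ∫ z : E, g z) := by
    have := MeasureTheory.Measure.integral_comp_smul_of_nonneg (volume : Measure E) f st
      (hR := hst0.le)
    rw [hrank] at this
    simp_rw [hpt] at this
    rw [MeasureTheory.integral_const_mul] at this
    have hpow : (0:ℝ) < st ^ n := pow_pos hst0 n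
    rw [smul_eq_mul] at this
    have := congrArg (fun u => (st:ℝ) ^ n * u) this
    rw [← mul_assoc, ← mul_assoc, mul_inv_cancel₀ hpow.ne', one_mul] at this
    rw [← this, ← Real.rpow_natCast st n]
    ring
  have hIfin : (∫ y : E, f y) = st ^ (-(b + c + μ)) * ∫ z : E, g z := by
    rw [hI, ← mul_assoc, ← Real.rpow_add hst0]
    congr 2
    ring
  -- identity for the comparison quantity
  have hcmp : ∀ C : ℝ, C * t ^ (-μ / 2) * (‖x‖ + lam + st) ^ (-b) * (‖x‖ + st) ^ (-c)
      = st ^ (-(b + c + μ)) * (C * (‖x'‖ + lam' + 1) ^ (-b) * (‖x'‖ + 1) ^ (-c)) := by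
    intro C
    have e1 : ‖x‖ + lam + st = st * (‖x'‖ + lam' + 1) := by
      rw [hnx, hlam']
      field_simp
    have e2 : ‖x‖ + st = st * (‖x'‖ + 1) := by rw [hnx]; ring
    have e3 : t ^ (-μ / 2) = st ^ (-μ) := by
      rw [hst, Real.sqrt_eq_rpow, ← Real.rpow_mul ht.le]
      congr 1
      ring
    rw [e1, e2, e3,
      Real.mul_rpow hst0.le (by positivity),
      Real.mul_rpow hst0.le (by positivity),
      show (-(b + c + μ)) = (-μ) + ((-b) + (-c)) by ring,
      Real.rpow_add hst0, Real.rpow_add hst0]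
    ring
  obtain ⟨-, hJlo, hJhi⟩ := hJ lam' hlam'0 x'
  rw [hrank] at hJlo hJhi
  have hstpos : (0:ℝ) ≤ st ^ (-(b + c + μ)) := by positivity
  constructor
  · rw [hIfin, hcmp c₁]
    exact mul_le_mul_of_nonneg_left hJlo hstpos
  · rw [hIfin, hcmp c₂]
    exact mul_le_mul_of_nonneg_left hJhi hstpos
end

section
/- Let S(t,x) satisfy |S(t,x)| ≤ C₀ (|x| + √t)^{-3} for t > 0, and let g : ℝ × ℝ³ → ℝ³ be bounded and supported in {|y| ≤ 1} in space. Define (Λg)(t,x) = ∫₀^∞ ∫_{|y|≤1} S(s, x−y) g(t−s, y) dy ds. Then there is a constant C with |Λg(t,x)| ≤ C ‖g‖_∞ / |x| for all |x| > 2 and all t. -/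
open MeasureTheory Real Set

-- translation of the rpow integral to `Ioi 0`
lemma aux_int (b : ℝ) (hb : 0 < b) :
    IntegrableOn (fun s : ℝ => (b + s) ^ (-(3/2) : ℝ)) (Ioi 0) ∧
    ∫ s in Ioi (0 : ℝ), (b + s) ^ (-(3/2) : ℝ) = 2 * b ^ (-(1/2) : ℝ) := by
  have hemb : MeasurableEmbedding (fun s : ℝ => s + b) :=
    (MeasurableEquiv.addRight b).measurableEmbedding
  have hmp : MeasurePreserving (fun s : ℝ => s + b) volume volume :=
    measurePreserving_add_right volume b
  have hpre : (fun s : ℝ => s + b) ⁻¹' Ioi b = Ioi 0 := by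
    ext u; simp [lt_add_iff_pos_left]
  have hInt : IntegrableOn (fun u : ℝ => u ^ (-(3/2) : ℝ)) (Ioi b) :=
    integrableOn_Ioi_rpow_of_lt (by norm_num) hb
  have hIval : ∫ u in Ioi b, u ^ (-(3/2) : ℝ) = 2 * b ^ (-(1/2) : ℝ) := by
    rw [integral_Ioi_rpow_of_lt (by norm_num) hb]
    have h1 : (-(3/2) : ℝ) + 1 = -(1/2) := by norm_num
    rw [h1]; ring
  constructor
  · have := (hmp.integrableOn_comp_preimage hemb (f := fun u : ℝ => u ^ (-(3/2) : ℝ))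
      (s := Ioi b)).2 hInt
    rw [hpre] at this
    refine this.congr_fun (fun s _ => ?_) measurableSet_Ioi
    simp [Function.comp, add_comm]
  · have := hmp.setIntegral_preimage_emb hemb (fun u : ℝ => u ^ (-(3/2) : ℝ)) (Ioi b)
    rw [hpre] at this
    rw [← hIval, ← this]
    refine setIntegral_congr_fun measurableSet_Ioi (fun s _ => ?_)
    rw [add_comm]

theorem stmt16 (C₀ : ℝ) (hC₀ : 0 < C₀)
    (S : ℝ → EuclideanSpace ℝ (Fin 3) →
      (EuclideanSpace ℝ (Fin 3) →L[ℝ] EuclideanSpace ℝ (Fin 3)))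
    (hS : ∀ t : ℝ, 0 < t → ∀ z, ‖S t z‖ ≤ C₀ * (‖z‖ + Real.sqrt t) ^ (-(3 : ℝ))) :
    ∃ C : ℝ, 0 < C ∧
      ∀ (M : ℝ) (g : ℝ → EuclideanSpace ℝ (Fin 3) → EuclideanSpace ℝ (Fin 3)),
        Measurable (Function.uncurry g) →
        (∀ t y, ‖g t y‖ ≤ M) →
        (∀ t y, 1 < ‖y‖ → g t y = 0) →
        ∀ (t : ℝ) (x : EuclideanSpace ℝ (Fin 3)), 2 < ‖x‖ →
          ‖∫ s in Set.Ioi (0 : ℝ),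
              ∫ y in Metric.closedBall (0 : EuclideanSpace ℝ (Fin 3)) 1, S s (x - y) (g (t - s) y)‖
            ≤ C * M / ‖x‖ := by
  set B : Set (EuclideanSpace ℝ (Fin 3)) := Metric.closedBall 0 1 with hB
  set V : ℝ := (volume B).toReal with hV
  have hV0 : 0 ≤ V := ENNReal.toReal_nonneg
  refine ⟨16 * C₀ * (V + 1), by positivity, ?_⟩
  intro M g hgmeas hgbd hgsupp t x hx
  have hM : 0 ≤ M := le_trans (norm_nonneg _) (hgbd 0 0)
  have hx0 : 0 < ‖x‖ := by linarith
  set b : ℝ := ‖x‖ ^ 2 with hb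
  have hb0 : 0 < b := by positivity
  -- pointwise bound on the inner integrand
  have key : ∀ s : ℝ, 0 < s → ∀ y : EuclideanSpace ℝ (Fin 3), y ∈ B →
      ‖S s (x - y) (g (t - s) y)‖ ≤ 8 * C₀ * M * (b + s) ^ (-(3/2) : ℝ) := by
    intro s hs y hy
    have hy1 : ‖y‖ ≤ 1 := by
      simpa [hB, mem_closedBall_iff_norm] using hy
    have h1 : ‖S s (x - y) (g (t - s) y)‖ ≤ ‖S s (x - y)‖ * M :=
      le_trans ((S s (x - y)).le_opNorm _)
        (mul_le_mul_of_nonneg_left (hgbd _ _) (norm_nonneg _))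
    have h2 : ‖S s (x - y)‖ ≤ C₀ * (‖x - y‖ + Real.sqrt s) ^ (-(3 : ℝ)) := hS s hs _
    -- geometry
    set u : ℝ := ‖x - y‖ + Real.sqrt s with hu
    set v : ℝ := Real.sqrt (b + s) with hv
    have hsq : Real.sqrt s ≥ 0 := Real.sqrt_nonneg s
    have hxy : ‖x‖ - 1 ≤ ‖x - y‖ := by
      have := norm_sub_norm_le x y
      calc ‖x‖ - 1 ≤ ‖x‖ - ‖y‖ := by linarith
        _ ≤ ‖x - y‖ := by
          have := abs_norm_sub_norm_le x y
          linarith [le_abs_self (‖x‖ - ‖y‖)]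
    have hu0 : 0 < u := by
      have : 0 < ‖x - y‖ := by linarith
      simp only [hu]; linarith
    have hv0 : 0 < v := Real.sqrt_pos.2 (by linarith)
    have hvle : v ≤ 2 * u := by
      have h3 : v ≤ ‖x‖ + Real.sqrt s := by
        rw [hv]
        have : b + s ≤ (‖x‖ + Real.sqrt s) ^ 2 := by
          have hss : Real.sqrt s ^ 2 = s := Real.sq_sqrt hs.le
          nlinarith [mul_nonneg hx0.le hsq]
        calc Real.sqrt (b + s) ≤ Real.sqrt ((‖x‖ + Real.sqrt s) ^ 2) :=
              Real.sqrt_le_sqrt this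
          _ = ‖x‖ + Real.sqrt s := Real.sqrt_sq (by positivity)
      have : ‖x‖ + Real.sqrt s ≤ 2 * u := by
        simp only [hu]; nlinarith
      linarith
    -- rpow comparison
    have hmono : u ^ (-(3 : ℝ)) ≤ (v / 2) ^ (-(3 : ℝ)) :=
      Real.rpow_le_rpow_of_nonpos (by positivity) (by linarith) (by norm_num)
    have hval : (v / 2) ^ (-(3 : ℝ)) = 8 * v ^ (-(3 : ℝ)) := by
      have hvne : v ≠ 0 := hv0.ne'
      rw [show (-(3:ℝ)) = ((-3 : ℤ) : ℝ) by norm_num, Real.rpow_intCast, Real.rpow_intCast,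
        zpow_neg, zpow_neg, div_zpow]
      rw [inv_div]
      field_simp
      ring
    have hveq : v ^ (-(3 : ℝ)) = (b + s) ^ (-(3/2) : ℝ) := by
      rw [hv, Real.sqrt_eq_rpow, ← Real.rpow_mul (by linarith : (0:ℝ) ≤ b + s)]
      norm_num
    calc ‖S s (x - y) (g (t - s) y)‖ ≤ ‖S s (x - y)‖ * M := h1
      _ ≤ C₀ * u ^ (-(3 : ℝ)) * M :=
          mul_le_mul_of_nonneg_right h2 hM
      _ ≤ C₀ * (8 * (b + s) ^ (-(3/2) : ℝ)) * M := by
          refine mul_le_mul_of_nonneg_right (mul_le_mul_of_nonneg_left ?_ hC₀.le) hM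
          calc u ^ (-(3:ℝ)) ≤ (v/2) ^ (-(3:ℝ)) := hmono
            _ = 8 * v ^ (-(3:ℝ)) := hval
            _ = 8 * (b + s) ^ (-(3/2) : ℝ) := by rw [hveq]
      _ = 8 * C₀ * M * (b + s) ^ (-(3/2) : ℝ) := by ring
  -- bound on the inner integral
  have hVfin : volume B ≠ ⊤ := (MeasureTheory.measure_closedBall_lt_top).ne
  have inner_bd : ∀ s : ℝ, 0 < s →
      ‖∫ y in B, S s (x - y) (g (t - s) y)‖ ≤ V * (8 * C₀ * M * (b + s) ^ (-(3/2) : ℝ)) := by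
    intro s hs
    have hconst : Integrable (fun _ : EuclideanSpace ℝ (Fin 3) =>
        8 * C₀ * M * (b + s) ^ (-(3/2) : ℝ)) (volume.restrict B) :=
      integrableOn_const hVfin
    have hae : ∀ᵐ y ∂volume.restrict B,
        ‖S s (x - y) (g (t - s) y)‖ ≤ 8 * C₀ * M * (b + s) ^ (-(3/2) : ℝ) := by
      refine (ae_restrict_iff' (measurableSet_closedBall)).2 ?_
      exact Filter.Eventually.of_forall (fun y hy => key s hs y hy)
    calc ‖∫ y in B, S s (x - y) (g (t - s) y)‖
        ≤ ∫ _ in B, 8 * C₀ * M * (b + s) ^ (-(3/2) : ℝ) :=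
          norm_integral_le_of_norm_le hconst hae
      _ = V * (8 * C₀ * M * (b + s) ^ (-(3/2) : ℝ)) := by
          rw [setIntegral_const]; simp [hV, smul_eq_mul, Measure.real]
  -- integrability of majorant, computation
  obtain ⟨hint, hval⟩ := aux_int b hb0
  have hmajInt : IntegrableOn (fun s : ℝ =>
      V * (8 * C₀ * M * (b + s) ^ (-(3/2) : ℝ))) (Ioi 0) := by
    have h : IntegrableOn (fun s : ℝ =>
        (V * (8 * C₀ * M)) * (b + s) ^ (-(3/2) : ℝ)) (Ioi 0) := hint.const_mul _
    exact h.congr_fun (fun s _ => by ring) measurableSet_Ioi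
  have hae2 : ∀ᵐ s ∂volume.restrict (Ioi (0:ℝ)),
      ‖∫ y in B, S s (x - y) (g (t - s) y)‖ ≤
        V * (8 * C₀ * M * (b + s) ^ (-(3/2) : ℝ)) := by
    refine (ae_restrict_iff' measurableSet_Ioi).2 ?_
    exact Filter.Eventually.of_forall (fun s hs => inner_bd s hs)
  have main : ‖∫ s in Ioi (0:ℝ), ∫ y in B, S s (x - y) (g (t - s) y)‖ ≤
      ∫ s in Ioi (0:ℝ), V * (8 * C₀ * M * (b + s) ^ (-(3/2) : ℝ)) :=
    norm_integral_le_of_norm_le hmajInt hae2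
  have hcomp : ∫ s in Ioi (0:ℝ), V * (8 * C₀ * M * (b + s) ^ (-(3/2) : ℝ)) =
      V * (8 * C₀ * M) * (2 * b ^ (-(1/2) : ℝ)) := by
    rw [← hval, ← integral_const_mul]
    refine setIntegral_congr_fun measurableSet_Ioi (fun s _ => ?_)
    ring
  have hbval : b ^ (-(1/2) : ℝ) = ‖x‖⁻¹ := by
    rw [hb, ← Real.rpow_natCast ‖x‖ 2, ← Real.rpow_mul (norm_nonneg x)]
    norm_num
    rw [Real.rpow_neg_one]
  calc ‖∫ s in Ioi (0:ℝ), ∫ y in B, S s (x - y) (g (t - s) y)‖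
      ≤ V * (8 * C₀ * M) * (2 * b ^ (-(1/2) : ℝ)) := by rw [← hcomp]; exact main
    _ = 16 * C₀ * V * M / ‖x‖ := by rw [hbval]; field_simp; ring
    _ ≤ 16 * C₀ * (V + 1) * M / ‖x‖ := by
        gcongr
        nlinarith
end

section
/- Let 0 < α < 2 and let G : ℝ × ℝ³ → ℝ^{3×3} satisfy |G(t,y)| ≤ M (1+|y|)^{-α-1} for all t, y. Suppose K(s, z) satisfies |K(s,z)| ≤ C₀ (|z| + √s)^{-4}. Define (ΘG)(t,x) = ∫₀^∞ ∫_{ℝ³} K(s, x−y) G(t−s, y) dy ds. Then there is C = C(α, C₀) with |ΘG(t,x)| ≤ C M (1 + |x|)^{-α} for all t and x. -/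
open MeasureTheory Measure Set Metric ENNReal intervalIntegral

noncomputable abbrev E3 := EuclideanSpace ℝ (Fin 3)

noncomputable def kap : ℝ≥0∞ := Measure.toSphere (volume : Measure E3) Set.univ

lemma kap_ne_top : kap ≠ ⊤ := measure_ne_top _ _


lemma polar_lintegral_aux (f : ℝ → ℝ≥0∞) (hf : Measurable f) :
    ∫⁻ x : E3, f ‖x‖ =
      (volume : Measure E3).toSphere univ *
        ∫⁻ r in Set.Ioi (0:ℝ), ENNReal.ofReal (r ^ (2:ℕ)) * f r := by
  have hdim : Module.finrank ℝ E3 = 3 := by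
    simp [finrank_euclideanSpace_fin]
  have h0 : (volume : Measure E3).restrict ({0}ᶜ) = volume :=
    restrict_compl_singleton 0
  have hmeas : Measurable (f ∘ Subtype.val ∘ (Prod.snd :
      (sphere (0:E3) 1 × Set.Ioi (0:ℝ)) → Set.Ioi (0:ℝ))) :=
    hf.comp (measurable_subtype_coe.comp measurable_snd)
  calc ∫⁻ x : E3, f ‖x‖ = ∫⁻ x in ({0}ᶜ : Set E3), f ‖x‖ := by rw [h0]
    _ = ∫⁻ x : ({0}ᶜ : Set E3), f ‖x.1‖ ∂((volume : Measure E3).comap Subtype.val) :=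
        (lintegral_subtype_comap (measurableSet_singleton (0:E3)).compl
          (fun x => f ‖x‖)).symm
    _ = ∫⁻ x : ({0}ᶜ : Set E3), (f ∘ Subtype.val ∘ Prod.snd) ((homeomorphUnitSphereProd E3) x)
          ∂((volume : Measure E3).comap Subtype.val) :=
          lintegral_congr fun x => by simp [homeomorphUnitSphereProd, homeomorphSphereProd]
    _ = ∫⁻ p : sphere (0:E3) 1 × Set.Ioi (0:ℝ), (f ∘ Subtype.val ∘ Prod.snd) p
          ∂((volume : Measure E3).toSphere.prod (volumeIoiPow (Module.finrank ℝ E3 - 1))) :=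
        (measurePreserving_homeomorphUnitSphereProd
          (volume : Measure E3)).lintegral_comp hmeas
    _ = (volume : Measure E3).toSphere univ *
          ∫⁻ r : Set.Ioi (0:ℝ), (f ∘ Subtype.val) r ∂(volumeIoiPow (Module.finrank ℝ E3 - 1)) := by
        rw [lintegral_prod _ hmeas.aemeasurable]
        simp [lintegral_const, mul_comm]
    _ = _ := by
        rw [hdim]
        congr 1
        rw [volumeIoiPow, lintegral_withDensity_eq_lintegral_mul _ (f := fun r : Set.Ioi (0:ℝ) =>
          ENNReal.ofReal (r.1 ^ (3-1 : ℕ))) (by fun_prop) (hf.comp measurable_subtype_coe),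
          ]
        exact lintegral_subtype_comap measurableSet_Ioi
          (fun r : ℝ => ENNReal.ofReal (r ^ (2:ℕ)) * f r)

lemma polar_lintegral (f : ℝ → ℝ≥0∞) (hf : Measurable f) :
    ∫⁻ x : E3, f ‖x‖ = kap * ∫⁻ r in Set.Ioi (0:ℝ), ENNReal.ofReal (r ^ (2:ℕ)) * f r :=
  polar_lintegral_aux f hf

lemma lint_Ioc_rpow {b q : ℝ} (hb : 0 < b) (hq : -1 < q) :
    ∫⁻ r in Ioc (0:ℝ) b, ENNReal.ofReal (r ^ q) = ENNReal.ofReal (b ^ (q+1) / (q+1)) := by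
  have hint : IntegrableOn (fun r : ℝ => r ^ q) (Ioc 0 b) := by
    rw [← intervalIntegrable_iff_integrableOn_Ioc_of_le hb.le]
    exact intervalIntegrable_rpow' hq
  rw [← ofReal_integral_eq_lintegral_ofReal hint]
  · rw [← intervalIntegral.integral_of_le hb.le, integral_rpow (Or.inl hq)]
    rw [Real.zero_rpow (by linarith)]
    norm_num
  · filter_upwards [ae_restrict_mem measurableSet_Ioc] with r hr
    exact Real.rpow_nonneg hr.1.le _

lemma lint_Ioi_rpow {c p : ℝ} (hc : 0 < c) (hp : p < -1) :
    ∫⁻ r in Ioi c, ENNReal.ofReal (r ^ p) = ENNReal.ofReal (-c ^ (p+1) / (p+1)) := by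
  have hint : IntegrableOn (fun r : ℝ => r ^ p) (Ioi c) :=
    (integrableOn_Ioi_rpow_iff hc).mpr hp
  rw [← ofReal_integral_eq_lintegral_ofReal hint, integral_Ioi_rpow_of_lt hp hc]
  filter_upwards [ae_restrict_mem measurableSet_Ioi] with r hr
  exact Real.rpow_nonneg (hc.trans hr).le _



lemma time_integral {a : ℝ} (ha : 0 < a) :
    ∫⁻ s in Ioi (0:ℝ), ENNReal.ofReal ((a + Real.sqrt s) ^ (-(4:ℝ)))
      ≤ ENNReal.ofReal (2 * a ^ (-(2:ℝ))) := by
  have hsplit : Ioi (0:ℝ) ⊆ Ioc 0 (a^2) ∪ Ioi (a^2) := Ioi_subset_Ioc_union_Ioi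
  calc ∫⁻ s in Ioi (0:ℝ), ENNReal.ofReal ((a + Real.sqrt s) ^ (-(4:ℝ)))
      ≤ ∫⁻ s in Ioc (0:ℝ) (a^2) ∪ Ioi (a^2), ENNReal.ofReal ((a + Real.sqrt s) ^ (-(4:ℝ))) :=
        lintegral_mono_set hsplit
    _ ≤ (∫⁻ s in Ioc (0:ℝ) (a^2), ENNReal.ofReal ((a + Real.sqrt s) ^ (-(4:ℝ))))
        + ∫⁻ s in Ioi (a^2), ENNReal.ofReal ((a + Real.sqrt s) ^ (-(4:ℝ))) :=
        lintegral_union_le _ _ _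
    _ ≤ ENNReal.ofReal (a ^ (-(2:ℝ))) + ENNReal.ofReal (a ^ (-(2:ℝ))) := by
        gcongr
        · calc ∫⁻ s in Ioc (0:ℝ) (a^2), ENNReal.ofReal ((a + Real.sqrt s) ^ (-(4:ℝ)))
              ≤ ∫⁻ _ in Ioc (0:ℝ) (a^2), ENNReal.ofReal (a ^ (-(4:ℝ))) := by
                refine setLIntegral_mono' measurableSet_Ioc fun s hs => ?_
                apply ENNReal.ofReal_le_ofReal
                apply Real.rpow_le_rpow_of_nonpos ha (by nlinarith [Real.sqrt_nonneg s]) (by norm_num)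
            _ = ENNReal.ofReal (a ^ (-(4:ℝ))) * ENNReal.ofReal (a^2) := by
                rw [lintegral_const, Measure.restrict_apply MeasurableSet.univ, univ_inter,
                  Real.volume_Ioc]
                norm_num
            _ = ENNReal.ofReal (a ^ (-(2:ℝ))) := by
                rw [← ENNReal.ofReal_mul (by positivity)]
                congr 1
                rw [← Real.rpow_natCast a 2, ← Real.rpow_add ha]
                norm_num
        · calc ∫⁻ s in Ioi ((a:ℝ)^2), ENNReal.ofReal ((a + Real.sqrt s) ^ (-(4:ℝ)))
              ≤ ∫⁻ s in Ioi ((a:ℝ)^2), ENNReal.ofReal (s ^ (-(2:ℝ))) := by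
                refine setLIntegral_mono' measurableSet_Ioi fun s hs => ?_
                apply ENNReal.ofReal_le_ofReal
                have hs0 : 0 < s := lt_of_le_of_lt (by positivity) hs
                have h1 : Real.sqrt s ≤ a + Real.sqrt s := by linarith
                have h2 : (Real.sqrt s) ^ (-(4:ℝ)) = s ^ (-(2:ℝ)) := by
                  rw [Real.sqrt_eq_rpow, ← Real.rpow_mul hs0.le]
                  norm_num
                calc (a + Real.sqrt s) ^ (-(4:ℝ)) ≤ (Real.sqrt s) ^ (-(4:ℝ)) :=
                      Real.rpow_le_rpow_of_nonpos (Real.sqrt_pos.mpr hs0) h1 (by norm_num)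
                  _ = s ^ (-(2:ℝ)) := h2
            _ = ENNReal.ofReal (a ^ (-(2:ℝ))) := by
                rw [lint_Ioi_rpow (by positivity) (by norm_num)]
                congr 1
                rw [← Real.rpow_natCast a 2, ← Real.rpow_mul ha.le]
                norm_num
    _ = ENNReal.ofReal (2 * a ^ (-(2:ℝ))) := by
        rw [← ENNReal.ofReal_add (by positivity) (by positivity)]
        ring_nf

lemma regionA {ρ : ℝ} (hρ : 0 < ρ) :
    ∫⁻ z : E3 in ball 0 ρ, ENNReal.ofReal (‖z‖ ^ (-(2:ℝ))) ≤ kap * ENNReal.ofReal ρ := by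
  set g : ℝ → ℝ≥0∞ := (Iio ρ).indicator (fun r => ENNReal.ofReal (r ^ (-(2:ℝ)))) with hg
  have hgm : Measurable g := by
    apply Measurable.indicator _ measurableSet_Iio
    fun_prop
  have h1 : ∫⁻ z : E3 in ball 0 ρ, ENNReal.ofReal (‖z‖ ^ (-(2:ℝ))) = ∫⁻ z : E3, g ‖z‖ := by
    rw [← lintegral_indicator measurableSet_ball _]
    refine lintegral_congr fun z => ?_
    by_cases h : ‖z‖ < ρ <;> simp [g, indicator, mem_ball_zero_iff, h]
  rw [h1, polar_lintegral g hgm]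
  have h2 : ∀ r ∈ Ioi (0:ℝ), ENNReal.ofReal (r ^ (2:ℕ)) * g r
      ≤ (Ioo 0 ρ).indicator (fun _ => (1:ℝ≥0∞)) r := by
    intro r hr
    rw [mem_Ioi] at hr
    by_cases h : r < ρ
    · simp only [g, indicator, mem_Iio, h, if_true, mem_Ioo, hr, true_and]
      rw [← ENNReal.ofReal_mul (by positivity)]
      have : r ^ (2:ℕ) * r ^ (-(2:ℝ)) = 1 := by
        rw [← Real.rpow_natCast r 2, ← Real.rpow_add hr]; norm_num
      rw [this]; simp
    · simp [g, indicator, h]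
  calc kap * ∫⁻ r in Ioi (0:ℝ), ENNReal.ofReal (r^(2:ℕ)) * g r
      ≤ kap * ∫⁻ r in Ioi (0:ℝ), (Ioo (0:ℝ) ρ).indicator (fun _ => (1:ℝ≥0∞)) r :=
        mul_le_mul_right (setLIntegral_mono' measurableSet_Ioi h2) _
    _ ≤ kap * ∫⁻ r : ℝ, (Ioo (0:ℝ) ρ).indicator (fun _ => (1:ℝ≥0∞)) r :=
        mul_le_mul_right (setLIntegral_le_lintegral _ _) _
    _ ≤ kap * ENNReal.ofReal ρ := by
        rw [lintegral_indicator measurableSet_Ioo _]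
        apply mul_le_mul_right
        simp [Real.volume_Ioo]

lemma regionB {α b : ℝ} (hα : 0 < α) (hα2 : α < 2) (hb : 0 < b) :
    ∫⁻ z : E3 in closedBall 0 b, ENNReal.ofReal ((1 + ‖z‖) ^ (-α-1))
      ≤ kap * ENNReal.ofReal (b ^ (2-α) / (2-α)) := by
  set g : ℝ → ℝ≥0∞ := (Iic b).indicator (fun r => ENNReal.ofReal ((1+r) ^ (-α-1))) with hg
  have hgm : Measurable g := by
    apply Measurable.indicator _ measurableSet_Iic
    fun_prop
  have h1 : ∫⁻ z : E3 in closedBall 0 b, ENNReal.ofReal ((1 + ‖z‖) ^ (-α-1))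
      = ∫⁻ z : E3, g ‖z‖ := by
    rw [← lintegral_indicator measurableSet_closedBall _]
    refine lintegral_congr fun z => ?_
    by_cases h : ‖z‖ ≤ b <;> simp [g, indicator, mem_closedBall_zero_iff, h]
  rw [h1, polar_lintegral g hgm]
  have h2 : ∀ r ∈ Ioi (0:ℝ), ENNReal.ofReal (r ^ (2:ℕ)) * g r
      ≤ (Ioc 0 b).indicator (fun r => ENNReal.ofReal (r ^ (1-α))) r := by
    intro r hr
    rw [mem_Ioi] at hr
    by_cases h : r ≤ b
    · simp only [g, indicator, mem_Iic, h, if_true, mem_Ioc, hr, true_and]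
      rw [← ENNReal.ofReal_mul (by positivity)]
      apply ENNReal.ofReal_le_ofReal
      calc r ^ (2:ℕ) * (1+r) ^ (-α-1) ≤ r ^ (2:ℕ) * r ^ (-α-1) :=
            mul_le_mul_of_nonneg_left
              (Real.rpow_le_rpow_of_nonpos hr (by linarith) (by linarith)) (by positivity)
        _ = r ^ (1-α) := by
            rw [← Real.rpow_natCast r 2, ← Real.rpow_add hr]; norm_num; ring_nf
    · simp [g, indicator, h]
  calc kap * ∫⁻ r in Ioi (0:ℝ), ENNReal.ofReal (r^(2:ℕ)) * g r
      ≤ kap * ∫⁻ r in Ioi (0:ℝ),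
          (Ioc (0:ℝ) b).indicator (fun r => ENNReal.ofReal (r ^ (1-α))) r :=
        mul_le_mul_right (setLIntegral_mono' measurableSet_Ioi h2) _
    _ ≤ kap * ∫⁻ r : ℝ, (Ioc (0:ℝ) b).indicator (fun r => ENNReal.ofReal (r ^ (1-α))) r :=
        mul_le_mul_right (setLIntegral_le_lintegral _ _) _
    _ ≤ kap * ENNReal.ofReal (b ^ (2-α) / (2-α)) := by
        rw [lintegral_indicator measurableSet_Ioc _, lint_Ioc_rpow hb (by linarith)]
        apply mul_le_mul_right
        apply ENNReal.ofReal_le_ofReal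
        rw [show (1-α) + 1 = 2 - α by ring]

lemma regionC {α c : ℝ} (hα : 0 < α) (hc : 0 < c) :
    ∫⁻ z : E3 in (closedBall (0:E3) c)ᶜ, ENNReal.ofReal ((1 + ‖z‖) ^ (-α-3))
      ≤ kap * ENNReal.ofReal (c ^ (-α) / α) := by
  set g : ℝ → ℝ≥0∞ := (Ioi c).indicator (fun r => ENNReal.ofReal ((1+r) ^ (-α-3))) with hg
  have hgm : Measurable g := by
    apply Measurable.indicator _ measurableSet_Ioi
    fun_prop
  have h1 : ∫⁻ z : E3 in (closedBall (0:E3) c)ᶜ, ENNReal.ofReal ((1 + ‖z‖) ^ (-α-3))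
      = ∫⁻ z : E3, g ‖z‖ := by
    rw [← lintegral_indicator measurableSet_closedBall.compl _]
    refine lintegral_congr fun z => ?_
    by_cases h : c < ‖z‖ <;>
      simp [g, indicator, mem_closedBall_zero_iff, h, not_lt.mpr, not_le.mpr]
  rw [h1, polar_lintegral g hgm]
  have h2 : ∀ r ∈ Ioi (0:ℝ), ENNReal.ofReal (r ^ (2:ℕ)) * g r
      ≤ (Ioi c).indicator (fun r => ENNReal.ofReal (r ^ (-1-α))) r := by
    intro r hr
    rw [mem_Ioi] at hr
    by_cases h : c < r
    · simp only [g, indicator, mem_Ioi, h, if_true]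
      rw [← ENNReal.ofReal_mul (by positivity)]
      apply ENNReal.ofReal_le_ofReal
      calc r ^ (2:ℕ) * (1+r) ^ (-α-3) ≤ r ^ (2:ℕ) * r ^ (-α-3) :=
            mul_le_mul_of_nonneg_left
              (Real.rpow_le_rpow_of_nonpos hr (by linarith) (by linarith)) (by positivity)
        _ = r ^ (-1-α) := by
            rw [← Real.rpow_natCast r 2, ← Real.rpow_add hr]; norm_num; ring_nf
    · simp [g, indicator, h]
  calc kap * ∫⁻ r in Ioi (0:ℝ), ENNReal.ofReal (r^(2:ℕ)) * g r
      ≤ kap * ∫⁻ r in Ioi (0:ℝ),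
          (Ioi c).indicator (fun r => ENNReal.ofReal (r ^ (-1-α))) r :=
        mul_le_mul_right (setLIntegral_mono' measurableSet_Ioi h2) _
    _ ≤ kap * ∫⁻ r : ℝ, (Ioi c).indicator (fun r => ENNReal.ofReal (r ^ (-1-α))) r :=
        mul_le_mul_right (setLIntegral_le_lintegral _ _) _
    _ ≤ kap * ENNReal.ofReal (c ^ (-α) / α) := by
        rw [lintegral_indicator measurableSet_Ioi _, lint_Ioi_rpow hc (by linarith)]
        apply mul_le_mul_right
        apply ENNReal.ofReal_le_ofReal
        rw [show (-1-α) + 1 = -α by ring]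
        rw [neg_div, div_neg, neg_neg]

lemma translate_ball {x : E3} {ρ : ℝ} :
    ∫⁻ y in ball x ρ, ENNReal.ofReal (‖x - y‖ ^ (-(2:ℝ))) =
    ∫⁻ z in ball (0:E3) ρ, ENNReal.ofReal (‖z‖ ^ (-(2:ℝ))) := by
  have hiff : ∀ y : E3, y ∈ ball x ρ ↔ x - y ∈ ball (0:E3) ρ := by
    intro y
    rw [mem_ball, mem_ball_zero_iff, dist_eq_norm, norm_sub_rev]
  have hmeas : Measurable ((ball (0:E3) ρ).indicator
      (fun z => ENNReal.ofReal (‖z‖ ^ (-(2:ℝ))))) := by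
    apply Measurable.indicator _ measurableSet_ball
    fun_prop
  rw [← lintegral_indicator measurableSet_ball _, ← lintegral_indicator measurableSet_ball _]
  calc ∫⁻ y : E3, (ball x ρ).indicator (fun y => ENNReal.ofReal (‖x - y‖ ^ (-(2:ℝ)))) y
      = ∫⁻ y : E3, (ball (0:E3) ρ).indicator
          (fun z => ENNReal.ofReal (‖z‖ ^ (-(2:ℝ)))) (x - y) := by
        refine lintegral_congr fun y => ?_
        by_cases h : y ∈ ball x ρ
        · rw [indicator_of_mem h, indicator_of_mem ((hiff y).mp h)]
        · rw [indicator_of_notMem h, indicator_of_notMem (fun hc => h ((hiff y).mpr hc))]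
    _ = _ := (measurePreserving_sub_left (volume : Measure E3) x).lintegral_comp hmeas

lemma spatial {α : ℝ} (hα : 0 < α) (hα2 : α < 2) (x : E3) :
    ∫⁻ y : E3, ENNReal.ofReal (‖x - y‖ ^ (-(2:ℝ))) * ENNReal.ofReal ((1 + ‖y‖) ^ (-α-1))
      ≤ kap * ENNReal.ofReal ((4 + 16/(2-α) + 16/α) * (1 + ‖x‖) ^ (-α)) := by
  set R : ℝ := 1 + ‖x‖ with hR
  have hR1 : 1 ≤ R := by simp [hR, norm_nonneg]
  have hR0 : 0 < R := by linarith
  set F : E3 → ℝ≥0∞ :=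
    fun y => ENNReal.ofReal (‖x - y‖ ^ (-(2:ℝ))) * ENNReal.ofReal ((1 + ‖y‖) ^ (-α-1)) with hF
  set A : Set E3 := ball x (R/2) with hA
  set B : Set E3 := closedBall (0:E3) (2*R) with hB
  have hT1 : ∫⁻ y in A, F y ≤ kap * ENNReal.ofReal (4 * R ^ (-α)) := by
    have step1 : ∫⁻ y in A, F y ≤
        ∫⁻ y in A, ENNReal.ofReal (‖x - y‖ ^ (-(2:ℝ))) * ENNReal.ofReal ((R/2) ^ (-α-1)) := by
      refine setLIntegral_mono' measurableSet_ball fun y hy => ?_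
      apply mul_le_mul_right
      apply ENNReal.ofReal_le_ofReal
      have h1 : R/2 ≤ 1 + ‖y‖ := by
        rw [hA, mem_ball, dist_eq_norm] at hy
        have h2 : ‖x‖ - ‖y‖ ≤ ‖y - x‖ := by
          rw [norm_sub_rev]; exact norm_sub_norm_le x y
        simp only [hR]; linarith
      exact Real.rpow_le_rpow_of_nonpos (by linarith) h1 (by linarith)
    have step2 : ∫⁻ y in A, ENNReal.ofReal (‖x - y‖ ^ (-(2:ℝ))) *
        ENNReal.ofReal ((R/2) ^ (-α-1))
        ≤ kap * ENNReal.ofReal (R/2) * ENNReal.ofReal ((R/2) ^ (-α-1)) := by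
      rw [lintegral_mul_const' _ _ ENNReal.ofReal_ne_top, translate_ball]
      exact mul_le_mul_left (regionA (by linarith)) _
    refine step1.trans (step2.trans ?_)
    rw [mul_assoc, ← ENNReal.ofReal_mul (by linarith)]
    apply mul_le_mul_right
    apply ENNReal.ofReal_le_ofReal
    have e1 : R/2 * (R/2) ^ (-α-1) = (R/2) ^ (-α) := by
      nth_rewrite 1 [← Real.rpow_one (R/2)]
      rw [← Real.rpow_add (by linarith)]; ring_nf
    rw [e1]
    have e2 : (R/2) ^ (-α) = R ^ (-α) * (2:ℝ) ^ α := by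
      rw [Real.div_rpow hR0.le (by norm_num : (0:ℝ) ≤ 2),
        Real.rpow_neg (by norm_num : (0:ℝ) ≤ 2)]
      field_simp
    rw [e2]
    have e3 : (2:ℝ) ^ α ≤ 4 := by
      calc (2:ℝ) ^ α ≤ (2:ℝ) ^ (2:ℝ) :=
        Real.rpow_le_rpow_of_exponent_le (by norm_num) hα2.le
      _ = 4 := by
        rw [show (2:ℝ) = ((2:ℕ):ℝ) by norm_num, Real.rpow_natCast]; norm_num
    calc R ^ (-α) * (2:ℝ) ^ α ≤ R ^ (-α) * 4 :=
        mul_le_mul_of_nonneg_left e3 (by positivity)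
      _ = 4 * R ^ (-α) := by ring
  have two_rpow_two : (2:ℝ) ^ (2:ℝ) = 4 := by
    rw [show (2:ℝ) = ((2:ℕ):ℝ) by norm_num, Real.rpow_natCast]; norm_num
  have hT2 : ∫⁻ y in B ∩ Aᶜ, F y ≤ kap * ENNReal.ofReal ((16/(2-α)) * R ^ (-α)) := by
    have hBAmeas : MeasurableSet (B ∩ Aᶜ) :=
      measurableSet_closedBall.inter measurableSet_ball.compl
    have step1 : ∫⁻ y in B ∩ Aᶜ, F y ≤
        ∫⁻ y in B ∩ Aᶜ, ENNReal.ofReal ((R/2) ^ (-(2:ℝ))) *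
          ENNReal.ofReal ((1+‖y‖) ^ (-α-1)) := by
      refine setLIntegral_mono' hBAmeas fun y hy => ?_
      apply mul_le_mul_left
      apply ENNReal.ofReal_le_ofReal
      have h1 : R/2 ≤ ‖x - y‖ := by
        have h := hy.2
        rw [hA, mem_compl_iff, mem_ball, not_lt, dist_eq_norm] at h
        calc R/2 ≤ ‖y - x‖ := h
          _ = ‖x - y‖ := norm_sub_rev _ _
      exact Real.rpow_le_rpow_of_nonpos (by linarith) h1 (by norm_num)
    have step2 : ∫⁻ y in B ∩ Aᶜ, ENNReal.ofReal ((R/2) ^ (-(2:ℝ))) *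
          ENNReal.ofReal ((1+‖y‖) ^ (-α-1))
        ≤ ENNReal.ofReal ((R/2) ^ (-(2:ℝ))) * (kap * ENNReal.ofReal ((2*R) ^ (2-α) / (2-α))) := by
      rw [lintegral_const_mul' _ _ ENNReal.ofReal_ne_top]
      apply mul_le_mul_right
      calc ∫⁻ y in B ∩ Aᶜ, ENNReal.ofReal ((1+‖y‖) ^ (-α-1))
          ≤ ∫⁻ y in B, ENNReal.ofReal ((1+‖y‖) ^ (-α-1)) :=
            lintegral_mono_set inter_subset_left
        _ ≤ kap * ENNReal.ofReal ((2*R) ^ (2-α) / (2-α)) := regionB hα hα2 (by linarith)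
    refine step1.trans (step2.trans ?_)
    rw [← mul_assoc, mul_comm (ENNReal.ofReal ((R/2) ^ (-(2:ℝ)))) kap, mul_assoc,
      ← ENNReal.ofReal_mul (by positivity)]
    apply mul_le_mul_right
    apply ENNReal.ofReal_le_ofReal
    have e1 : (R/2) ^ (-(2:ℝ)) = R ^ (-(2:ℝ)) * 4 := by
      rw [Real.div_rpow hR0.le (by norm_num : (0:ℝ) ≤ 2),
        Real.rpow_neg (by norm_num : (0:ℝ) ≤ 2), two_rpow_two]
      field_simp
    have e2 : (2*R) ^ (2-α) = (2:ℝ) ^ (2-α) * R ^ (2-α) :=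
      Real.mul_rpow (by norm_num) hR0.le
    have e3 : (2:ℝ) ^ (2-α) ≤ 4 := by
      rw [← two_rpow_two]
      exact Real.rpow_le_rpow_of_exponent_le (by norm_num) (by linarith)
    calc (R/2) ^ (-(2:ℝ)) * ((2*R) ^ (2-α) / (2-α))
        = (R ^ (-(2:ℝ)) * 4) * (((2:ℝ) ^ (2-α) * R ^ (2-α)) / (2-α)) := by rw [e1, e2]
      _ ≤ (R ^ (-(2:ℝ)) * 4) * ((4 * R ^ (2-α)) / (2-α)) := by
          gcongr
      _ = (16/(2-α)) * (R ^ (-(2:ℝ)) * R ^ (2-α)) := by ring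
      _ = (16/(2-α)) * R ^ (-α) := by
          rw [← Real.rpow_add hR0, show (-(2:ℝ) + (2-α)) = -α by ring]
  have hT3 : ∫⁻ y in Bᶜ ∩ Aᶜ, F y ≤ kap * ENNReal.ofReal ((16/α) * R ^ (-α)) := by
    have hBAmeas : MeasurableSet (Bᶜ ∩ Aᶜ) :=
      measurableSet_closedBall.compl.inter measurableSet_ball.compl
    have step1 : ∫⁻ y in Bᶜ ∩ Aᶜ, F y ≤
        ∫⁻ y in Bᶜ ∩ Aᶜ, ENNReal.ofReal (16:ℝ) * ENNReal.ofReal ((1+‖y‖) ^ (-α-3)) := by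
      refine setLIntegral_mono' hBAmeas fun y hy => ?_
      have hy1 : 2*R < ‖y‖ := by
        have h := hy.1
        rw [hB, mem_compl_iff, mem_closedBall, not_le, dist_zero_right] at h
        exact h
      have h1y : (0:ℝ) < 1 + ‖y‖ := by positivity
      have hxy : (1+‖y‖)/4 ≤ ‖x - y‖ := by
        have h2 : ‖y‖ - ‖x‖ ≤ ‖y - x‖ := norm_sub_norm_le y x
        have h3 : ‖y - x‖ = ‖x - y‖ := norm_sub_rev _ _
        have h4 : ‖x‖ = R - 1 := by simp only [hR]; ring
        rw [h3] at h2
        rw [h4] at h2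
        linarith
      calc F y ≤ ENNReal.ofReal (((1+‖y‖)/4) ^ (-(2:ℝ))) *
            ENNReal.ofReal ((1 + ‖y‖) ^ (-α-1)) := by
            apply mul_le_mul_left
            apply ENNReal.ofReal_le_ofReal
            exact Real.rpow_le_rpow_of_nonpos (by positivity) hxy (by norm_num)
        _ = ENNReal.ofReal (16:ℝ) * ENNReal.ofReal ((1+‖y‖) ^ (-α-3)) := by
            rw [← ENNReal.ofReal_mul (by positivity), ← ENNReal.ofReal_mul (by norm_num)]
            congr 1
            have e1 : ((1+‖y‖)/4) ^ (-(2:ℝ)) = (1+‖y‖) ^ (-(2:ℝ)) * 16 := by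
              rw [Real.div_rpow (by positivity) (by norm_num : (0:ℝ) ≤ 4),
                Real.rpow_neg (by norm_num : (0:ℝ) ≤ 4),
                show (4:ℝ) ^ (2:ℝ) = 16 by
                  rw [show (2:ℝ) = ((2:ℕ):ℝ) by norm_num, Real.rpow_natCast]; norm_num]
              field_simp
            rw [e1, mul_comm ((1+‖y‖) ^ (-(2:ℝ))) 16, mul_assoc, ← Real.rpow_add h1y]
            norm_num
            ring_nf
    have step2 : ∫⁻ y in Bᶜ ∩ Aᶜ, ENNReal.ofReal (16:ℝ) * ENNReal.ofReal ((1+‖y‖) ^ (-α-3))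
        ≤ ENNReal.ofReal (16:ℝ) * (kap * ENNReal.ofReal ((2*R) ^ (-α) / α)) := by
      rw [lintegral_const_mul' _ _ ENNReal.ofReal_ne_top]
      apply mul_le_mul_right
      calc ∫⁻ y in Bᶜ ∩ Aᶜ, ENNReal.ofReal ((1+‖y‖) ^ (-α-3))
          ≤ ∫⁻ y in Bᶜ, ENNReal.ofReal ((1+‖y‖) ^ (-α-3)) :=
            lintegral_mono_set inter_subset_left
        _ ≤ kap * ENNReal.ofReal ((2*R) ^ (-α) / α) := regionC hα (by linarith)
    refine step1.trans (step2.trans ?_)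
    rw [← mul_assoc, mul_comm (ENNReal.ofReal (16:ℝ)) kap, mul_assoc,
      ← ENNReal.ofReal_mul (by norm_num)]
    apply mul_le_mul_right
    apply ENNReal.ofReal_le_ofReal
    have e1 : (2*R) ^ (-α) ≤ R ^ (-α) :=
      Real.rpow_le_rpow_of_nonpos hR0 (by linarith) (by linarith)
    calc 16 * ((2*R) ^ (-α) / α) ≤ 16 * (R ^ (-α) / α) :=
        mul_le_mul_of_nonneg_left ((div_le_div_iff_of_pos_right hα).mpr e1) (by norm_num)
      _ = (16/α) * R ^ (-α) := by ring
  have hsplit : ∫⁻ y : E3, F y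
      = (∫⁻ y in A, F y) + ((∫⁻ y in B ∩ Aᶜ, F y) + ∫⁻ y in Bᶜ ∩ Aᶜ, F y) := by
    rw [← lintegral_add_compl F (measurableSet_ball : MeasurableSet A)]
    congr 1
    rw [← lintegral_add_compl F (measurableSet_closedBall : MeasurableSet B)
      (μ := volume.restrict Aᶜ), Measure.restrict_restrict measurableSet_closedBall,
      Measure.restrict_restrict measurableSet_closedBall.compl]
  calc ∫⁻ y : E3, F y ≤ kap * ENNReal.ofReal (4 * R ^ (-α)) +
        (kap * ENNReal.ofReal ((16/(2-α)) * R ^ (-α)) +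
         kap * ENNReal.ofReal ((16/α) * R ^ (-α))) := by
        rw [hsplit]; gcongr
    _ = kap * ENNReal.ofReal ((4 + 16/(2-α) + 16/α) * R ^ (-α)) := by
        have h2α : (0:ℝ) < 2 - α := by linarith
        have hn1 : (0:ℝ) ≤ 16/(2-α) * R ^ (-α) :=
          mul_nonneg (div_nonneg (by norm_num) h2α.le) (by positivity)
        rw [← mul_add, ← mul_add,
          ← ENNReal.ofReal_add hn1 (by positivity),
          ← ENNReal.ofReal_add (by positivity) (add_nonneg hn1 (by positivity))]
        congr 2
        ring

theorem stmt17 (α C₀ : ℝ) (hα : 0 < α) (hα2 : α < 2) (hC₀ : 0 < C₀) :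
    ∃ C : ℝ, 0 < C ∧
      ∀ (M : ℝ) (G : ℝ → EuclideanSpace ℝ (Fin 3) → Fin 3 → Fin 3 → ℝ)
        (K : ℝ → EuclideanSpace ℝ (Fin 3) → ℝ),
        (∀ t y, ‖G t y‖ ≤ M * (1 + ‖y‖) ^ (-α - 1)) →
        (∀ s : ℝ, 0 < s → ∀ z, |K s z| ≤ C₀ * (‖z‖ + Real.sqrt s) ^ (-(4 : ℝ))) →
        ∀ (t : ℝ) (x : EuclideanSpace ℝ (Fin 3)),
          ‖∫ s in Set.Ioi (0 : ℝ), ∫ y : EuclideanSpace ℝ (Fin 3), K s (x - y) • G (t - s) y‖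
            ≤ C * M * (1 + ‖x‖) ^ (-α) := by
  have h2α : (0:ℝ) < 2 - α := by linarith
  set Cα : ℝ := 4 + 16/(2-α) + 16/α with hCα
  have hCαpos : 0 < Cα := by
    have : 0 < 16/(2-α) := by positivity
    have : 0 < 16/α := by positivity
    simp only [hCα]; linarith
  refine ⟨2 * C₀ * (kap.toReal + 1) * Cα, by positivity, ?_⟩
  intro M G K hG hK t x
  have hM : 0 ≤ M := by
    have := hG 0 0
    have h0 : ‖(0:E3)‖ = 0 := norm_zero
    rw [h0] at this
    simp only [add_zero, Real.one_rpow] at this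
    calc (0:ℝ) ≤ ‖G 0 0‖ := norm_nonneg _
      _ ≤ M * 1 := by simpa using this
      _ = M := mul_one M
  set R : ℝ := 1 + ‖x‖ with hR
  have hR0 : 0 < R := by positivity
  set Φ : ℝ → E3 → ℝ≥0∞ := fun s y =>
    ENNReal.ofReal (C₀ * (‖x - y‖ + Real.sqrt s) ^ (-(4:ℝ))) *
      ENNReal.ofReal (M * (1 + ‖y‖) ^ (-α - 1)) with hΦ
  have hΦmeas : Measurable (fun p : ℝ × E3 => Φ p.1 p.2) := by
    simp only [hΦ]
    fun_prop
  -- step 1-3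
  have key : (‖∫ s in Set.Ioi (0:ℝ), ∫ y : E3, K s (x - y) • G (t - s) y‖₊ : ℝ≥0∞)
      ≤ ∫⁻ s in Set.Ioi (0:ℝ), ∫⁻ y : E3, Φ s y := by
    calc (‖∫ s in Set.Ioi (0:ℝ), ∫ y : E3, K s (x - y) • G (t - s) y‖₊ : ℝ≥0∞)
        ≤ ∫⁻ s in Set.Ioi (0:ℝ), ‖∫ y : E3, K s (x - y) • G (t - s) y‖₊ :=
          enorm_integral_le_lintegral_enorm _
      _ ≤ ∫⁻ s in Set.Ioi (0:ℝ), ∫⁻ y : E3, Φ s y := by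
          refine setLIntegral_mono' measurableSet_Ioi fun s hs => ?_
          rw [mem_Ioi] at hs
          calc (‖∫ y : E3, K s (x - y) • G (t - s) y‖₊ : ℝ≥0∞)
              ≤ ∫⁻ y : E3, ‖K s (x - y) • G (t - s) y‖₊ :=
                enorm_integral_le_lintegral_enorm _
            _ ≤ ∫⁻ y : E3, Φ s y := by
                refine lintegral_mono fun y => ?_
                rw [← enorm_eq_nnnorm, ← ofReal_norm, norm_smul, Real.norm_eq_abs]
                have hb1 : |K s (x - y)| ≤ C₀ * (‖x - y‖ + Real.sqrt s) ^ (-(4:ℝ)) :=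
                  hK s hs (x - y)
                have hb2 : ‖G (t - s) y‖ ≤ M * (1 + ‖y‖) ^ (-α - 1) := hG (t - s) y
                have hnn : (0:ℝ) ≤ C₀ * (‖x - y‖ + Real.sqrt s) ^ (-(4:ℝ)) := by positivity
                calc ENNReal.ofReal (|K s (x - y)| * ‖G (t - s) y‖)
                    ≤ ENNReal.ofReal ((C₀ * (‖x - y‖ + Real.sqrt s) ^ (-(4:ℝ))) *
                        (M * (1 + ‖y‖) ^ (-α - 1))) := by
                      apply ENNReal.ofReal_le_ofReal
                      exact mul_le_mul hb1 hb2 (norm_nonneg _) hnn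
                  _ = Φ s y := by
                      rw [hΦ, ENNReal.ofReal_mul hnn]
  -- swap and integrate
  have swap : ∫⁻ s in Set.Ioi (0:ℝ), ∫⁻ y : E3, Φ s y
      = ∫⁻ y : E3, ∫⁻ s in Set.Ioi (0:ℝ), Φ s y :=
    lintegral_lintegral_swap hΦmeas.aemeasurable
  have inner : ∀ᵐ y : E3, (∫⁻ s in Set.Ioi (0:ℝ), Φ s y)
      ≤ ENNReal.ofReal (2 * C₀ * M) *
          (ENNReal.ofReal (‖x - y‖ ^ (-(2:ℝ))) * ENNReal.ofReal ((1 + ‖y‖) ^ (-α-1))) := by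
    have hne : ∀ᵐ y : E3, y ≠ x := by
      rw [ae_iff]
      have : {y : E3 | ¬ y ≠ x} = {x} := by ext y; simp
      rw [this]
      exact measure_singleton x
    filter_upwards [hne] with y hy
    have ha : 0 < ‖x - y‖ := by
      rw [norm_pos_iff, sub_ne_zero]
      exact fun h => hy h.symm
    calc ∫⁻ s in Set.Ioi (0:ℝ), Φ s y
        = ENNReal.ofReal C₀ * (∫⁻ s in Set.Ioi (0:ℝ),
            ENNReal.ofReal ((‖x - y‖ + Real.sqrt s) ^ (-(4:ℝ)))) *
            ENNReal.ofReal (M * (1 + ‖y‖) ^ (-α - 1)) := by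
          rw [← lintegral_const_mul' _ _ ENNReal.ofReal_ne_top,
            ← lintegral_mul_const' _ _ ENNReal.ofReal_ne_top]
          refine setLIntegral_congr_fun measurableSet_Ioi (fun s hs => ?_)
          simp only [hΦ]
          rw [ENNReal.ofReal_mul hC₀.le]
      _ ≤ ENNReal.ofReal C₀ * ENNReal.ofReal (2 * ‖x - y‖ ^ (-(2:ℝ))) *
            ENNReal.ofReal (M * (1 + ‖y‖) ^ (-α - 1)) := by
          exact mul_le_mul_left (mul_le_mul_right (time_integral ha) _) _
      _ = ENNReal.ofReal (2 * C₀ * M) *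
          (ENNReal.ofReal (‖x - y‖ ^ (-(2:ℝ))) * ENNReal.ofReal ((1 + ‖y‖) ^ (-α-1))) := by
          rw [← ENNReal.ofReal_mul hC₀.le, ← ENNReal.ofReal_mul (by positivity),
            ← ENNReal.ofReal_mul (by positivity), ← ENNReal.ofReal_mul (by positivity)]
          congr 1
          ring
  have total : (‖∫ s in Set.Ioi (0:ℝ), ∫ y : E3, K s (x - y) • G (t - s) y‖₊ : ℝ≥0∞)
      ≤ ENNReal.ofReal (2 * C₀ * M) * (kap * ENNReal.ofReal (Cα * R ^ (-α))) := by
    refine key.trans ?_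
    rw [swap]
    calc ∫⁻ y : E3, ∫⁻ s in Set.Ioi (0:ℝ), Φ s y
        ≤ ∫⁻ y : E3, ENNReal.ofReal (2 * C₀ * M) *
            (ENNReal.ofReal (‖x - y‖ ^ (-(2:ℝ))) * ENNReal.ofReal ((1 + ‖y‖) ^ (-α-1))) :=
          lintegral_mono_ae inner
      _ = ENNReal.ofReal (2 * C₀ * M) * ∫⁻ y : E3,
            ENNReal.ofReal (‖x - y‖ ^ (-(2:ℝ))) * ENNReal.ofReal ((1 + ‖y‖) ^ (-α-1)) :=
          lintegral_const_mul' _ _ ENNReal.ofReal_ne_top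
      _ ≤ ENNReal.ofReal (2 * C₀ * M) * (kap * ENNReal.ofReal (Cα * R ^ (-α))) :=
          mul_le_mul_right (spatial hα hα2 x) _
  -- convert back to reals
  have hkap : kap ≤ ENNReal.ofReal (kap.toReal + 1) := by
    conv_lhs => rw [← ENNReal.ofReal_toReal kap_ne_top]
    exact ENNReal.ofReal_le_ofReal (by linarith)
  have final : (‖∫ s in Set.Ioi (0:ℝ), ∫ y : E3, K s (x - y) • G (t - s) y‖₊ : ℝ≥0∞)
      ≤ ENNReal.ofReal (2 * C₀ * (kap.toReal + 1) * Cα * M * R ^ (-α)) := by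
    refine total.trans ?_
    calc ENNReal.ofReal (2 * C₀ * M) * (kap * ENNReal.ofReal (Cα * R ^ (-α)))
        ≤ ENNReal.ofReal (2 * C₀ * M) *
            (ENNReal.ofReal (kap.toReal + 1) * ENNReal.ofReal (Cα * R ^ (-α))) :=
          mul_le_mul_right (mul_le_mul_left hkap _) _
      _ = ENNReal.ofReal (2 * C₀ * (kap.toReal + 1) * Cα * M * R ^ (-α)) := by
          rw [← ENNReal.ofReal_mul (by positivity), ← ENNReal.ofReal_mul (by positivity)]
          congr 1
          ring
  rw [← enorm_eq_nnnorm, ← ofReal_norm] at final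
  have := (ENNReal.ofReal_le_ofReal_iff (by positivity)).mp final
  calc ‖∫ s in Set.Ioi (0:ℝ), ∫ y : E3, K s (x - y) • G (t - s) y‖
      ≤ 2 * C₀ * (kap.toReal + 1) * Cα * M * R ^ (-α) := this
    _ = 2 * C₀ * (kap.toReal + 1) * Cα * M * (1 + ‖x‖) ^ (-α) := by rw [hR]
end
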